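/- In the classical realisation on ℝ⁶, the following hold: {C_{23}, C_{12} + C_{13}} = 0, {C_{12}, C_{13} + C_{23}} = 0, and {C_{13}, C_{12} + C_{23}} = 0. -/

import Mathlib

open Finset

/-- Canonical Poisson bracket on the phase space ℝ²ⁿ. -/
noncomputable def pb (n : ℕ) (f g : (Fin n → ℝ) → (Fin n → ℝ) → ℝ)
    (x p : Fin n → ℝ) : ℝ :=
  ∑ j, (deriv (fun t => f (Function.update x j t) p) (x j) *
        deriv (fun t => g x (Function.update p j t)) (p j) -
        deriv (fun t => f x (Function.update p j t)) (p j) *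
        deriv (fun t => g (Function.update x j t) p) (x j))

/-- The two-index Racah generator `C_{ij}` in the classical realisation. -/
noncomputable def Cij (n : ℕ) (a : Fin n → ℝ) (i j : Fin n)
    (x p : Fin n → ℝ) : ℝ :=
  -(1 / 4) * ((x i * p j - x j * p i) ^ 2 + a i * (x j) ^ 2 / (x i) ^ 2 +
    a j * (x i) ^ 2 / (x j) ^ 2 + a i + a j)

lemma HC {K t : ℝ} : HasDerivAt (fun _ : ℝ => K) 0 t := hasDerivAt_const t K

lemma Dadd {f₁ f₂ : ℝ → ℝ} {d₁ d₂ t : ℝ} (h₁ : HasDerivAt f₁ d₁ t)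
    (h₂ : HasDerivAt f₂ d₂ t) : deriv (fun s => f₁ s + f₂ s) t = d₁ + d₂ :=
  (h₁.add h₂).deriv

lemma HX1 {B C A1 Q1 A2 Q2 E1 E2 t : ℝ} (ht : t ≠ 0) :
    HasDerivAt (fun s : ℝ => -(1 / 4) * ((s * B - C) ^ 2 + A1 * Q1 / s ^ 2 + A2 * s ^ 2 / Q2 + E1 + E2))
      (-(1 / 4) * (2 * (t * B - C) * B - 2 * (A1 * Q1) / t ^ 3 + 2 * A2 * t / Q2)) t := by
  have h2 := (((hasDerivAt_id t).mul_const B).sub_const C).pow 2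
  have h3 := (hasDerivAt_const t (A1 * Q1)).div (hasDerivAt_pow 2 t) (pow_ne_zero 2 ht)
  have h4 := ((hasDerivAt_pow 2 t).const_mul A2).div_const Q2
  have h := ((((h2.add h3).add h4).add_const E1).add_const E2).const_mul (-(1/4) : ℝ)
  refine h.congr_deriv ?_
  simp only [id_eq]
  field_simp
  ring

lemma HX2 {B C A1 Q1 A2 Q2 E1 E2 t : ℝ} (ht : t ≠ 0) :
    HasDerivAt (fun s : ℝ => -(1 / 4) * ((C - s * B) ^ 2 + A1 * s ^ 2 / Q1 + A2 * Q2 / s ^ 2 + E1 + E2))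
      (-(1 / 4) * (-(2 * (C - t * B) * B) + 2 * A1 * t / Q1 - 2 * (A2 * Q2) / t ^ 3)) t := by
  have h2 := (((hasDerivAt_id t).mul_const B).const_sub C).pow 2
  have h3 := ((hasDerivAt_pow 2 t).const_mul A1).div_const Q1
  have h4 := (hasDerivAt_const t (A2 * Q2)).div (hasDerivAt_pow 2 t) (pow_ne_zero 2 ht)
  have h := ((((h2.add h3).add h4).add_const E1).add_const E2).const_mul (-(1/4) : ℝ)
  refine h.congr_deriv ?_
  simp only [id_eq]
  field_simp
  ring

lemma HP1 {U V c2 c3 c4 c5 t : ℝ} :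
    HasDerivAt (fun s : ℝ => -(1 / 4) * ((U * s - V) ^ 2 + c2 + c3 + c4 + c5))
      (-(1 / 4) * (2 * (U * t - V) * U)) t := by
  have h2 := (((hasDerivAt_id t).const_mul U).sub_const V).pow 2
  have h := ((((h2.add_const c2).add_const c3).add_const c4).add_const c5).const_mul (-(1/4) : ℝ)
  refine h.congr_deriv ?_
  simp only [id_eq]
  ring

lemma HP2 {U V c2 c3 c4 c5 t : ℝ} :
    HasDerivAt (fun s : ℝ => -(1 / 4) * ((V - U * s) ^ 2 + c2 + c3 + c4 + c5))
      (-(1 / 4) * (-(2 * (V - U * t) * U))) t := by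
  have h2 := (((hasDerivAt_id t).const_mul U).const_sub V).pow 2
  have h := ((((h2.add_const c2).add_const c3).add_const c4).add_const c5).const_mul (-(1/4) : ℝ)
  refine h.congr_deriv ?_
  simp only [id_eq]
  ring

set_option maxHeartbeats 4000000 in
theorem stmt12 (a : Fin 3 → ℝ) (x p : Fin 3 → ℝ) (hx : ∀ i, x i ≠ 0) :
    pb 3 (Cij 3 a 1 2) (fun x p => Cij 3 a 0 1 x p + Cij 3 a 0 2 x p) x p = 0 ∧
    pb 3 (Cij 3 a 0 1) (fun x p => Cij 3 a 0 2 x p + Cij 3 a 1 2 x p) x p = 0 ∧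
    pb 3 (Cij 3 a 0 2) (fun x p => Cij 3 a 0 1 x p + Cij 3 a 1 2 x p) x p = 0 := by
  have e0 := hx 0
  have e1 := hx 1
  have e2 := hx 2
  refine ⟨?_, ?_, ?_⟩ <;>
    simp only [pb, Cij, Fin.sum_univ_three, Function.update_self,
      Function.update_of_ne (by decide : (0:Fin 3) ≠ 1), Function.update_of_ne (by decide : (0:Fin 3) ≠ 2),
      Function.update_of_ne (by decide : (1:Fin 3) ≠ 0), Function.update_of_ne (by decide : (1:Fin 3) ≠ 2),
      Function.update_of_ne (by decide : (2:Fin 3) ≠ 0), Function.update_of_ne (by decide : (2:Fin 3) ≠ 1)]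
  · rw [deriv_const, deriv_const, (HX1 e1).deriv, (HX2 e2).deriv, HP2.deriv, HP1.deriv,
      Dadd (HX1 e0) (HX1 e0), Dadd (HX2 e1) HC, Dadd HC (HX2 e2),
      Dadd HP2 HP2, Dadd HP1 HC, Dadd HC HP1]
    field_simp
    ring
  · rw [deriv_const, deriv_const, (HX1 e0).deriv, (HX2 e1).deriv, HP2.deriv, HP1.deriv,
      Dadd (HX1 e0) HC, Dadd HC (HX1 e1), Dadd (HX2 e2) (HX2 e2),
      Dadd HP2 HC, Dadd HC HP2, Dadd HP1 HP1]
    field_simp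
    ring
  · rw [deriv_const, deriv_const, (HX1 e0).deriv, (HX2 e2).deriv, HP2.deriv, HP1.deriv,
      Dadd (HX1 e0) HC, Dadd (HX2 e1) (HX1 e1), Dadd HC (HX2 e2),
      Dadd HP2 HC, Dadd HP1 HP2, Dadd HC HP1]
    field_simp
    ring
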